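/- For every initial distribution p on ℝ with ∫ w dp < ∞ and every state x: (a) the functions z ↦ F(p,z), z ↦ G(p,z), z ↦ f(x,z) and z ↦ g(x,z) are bounded càdlàg functions on ℝ whose left limits at any z ∈ ℝ equal F(p,z⁻), G(p,z⁻), f(x,z⁻) and g(x,z⁻), respectively; (b) as z → −∞ they converge to F(p,−∞), G(p,−∞), f(x,−∞), g(x,−∞) (the metrics of the always-active policy, threshold −∞); (c) as z → ∞ they converge to F(p,∞), G(p,∞), f(x,∞), g(x,∞) (the metrics of the always-passive policy, threshold ∞). -/

import Mathlib

open MeasureTheory ProbabilityTheory Filter Topology Set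

noncomputable section

/-- A restless bandit project: the model data (discount factor `β`, passive/active
Markov transition kernels `κ false`/`κ true`, reward `r` and resource consumption `c`),
Assumption 1 (the weighted sup-norm conditions for weight `w` and constants `M`, `γ`),
together with the threshold-policy performance metrics `F`, `G` (for `z`-policies,
active iff `x > z`), `Fm`, `Gm` (for `z⁻`-policies, active iff `x ≥ z`), and the
optimal value function `V lam` of the `lam`-price problem, each of which is the
(unique) `w`-bounded measurable solution of its fixed-point equation. -/
structure Bandit where
  β : ℝ
  κ : Bool → Kernel ℝ ℝ
  r : ℝ → Bool → ℝ
  c : ℝ → Bool → ℝ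
  w : ℝ → ℝ
  M : ℝ
  γ : ℝ
  F : ℝ → EReal → ℝ
  G : ℝ → EReal → ℝ
  Fm : ℝ → EReal → ℝ
  Gm : ℝ → EReal → ℝ
  V : ℝ → ℝ → ℝ
  hβ0 : 0 ≤ β
  hβ1 : β < 1
  hκ : ∀ a, IsMarkovKernel (κ a)
  hr_cont : ∀ a, Continuous fun x => r x a
  hc_cont : ∀ a, Continuous fun x => c x a
  hc0 : ∀ x, 0 ≤ c x false
  hc01 : ∀ x, c x false < c x true
  hw_meas : Measurable w
  hw_one : ∀ x, 1 ≤ w x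
  hM : 0 < M
  hβγ : β ≤ γ
  hγ1 : γ < 1
  hr_bd : ∀ x a, |r x a| ≤ M * w x
  hc_bd : ∀ x a, c x a ≤ M * w x
  hw_int : ∀ a x, Integrable w (κ a x)
  hw_drift : ∀ a x, β * ∫ y, w y ∂(κ a x) ≤ γ * w x
  hF_meas : ∀ z, Measurable fun x => F x z
  hG_meas : ∀ z, Measurable fun x => G x z
  hFm_meas : ∀ z, Measurable fun x => Fm x z
  hGm_meas : ∀ z, Measurable fun x => Gm x z
  hV_meas : ∀ lam, Measurable (V lam)
  hF_bdd : ∀ z, ∃ C, ∀ x, |F x z| ≤ C * w x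
  hG_bdd : ∀ z, ∃ C, ∀ x, |G x z| ≤ C * w x
  hFm_bdd : ∀ z, ∃ C, ∀ x, |Fm x z| ≤ C * w x
  hGm_bdd : ∀ z, ∃ C, ∀ x, |Gm x z| ≤ C * w x
  hV_bdd : ∀ lam, ∃ C, ∀ x, |V lam x| ≤ C * w x
  hF_eq : ∀ x z, F x z =
    r x (decide (z < (x : EReal))) +
      β * ∫ y, F y z ∂(κ (decide (z < (x : EReal))) x)
  hG_eq : ∀ x z, G x z =
    c x (decide (z < (x : EReal))) +
      β * ∫ y, G y z ∂(κ (decide (z < (x : EReal))) x)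
  hFm_eq : ∀ x z, Fm x z =
    r x (decide (z ≤ (x : EReal))) +
      β * ∫ y, Fm y z ∂(κ (decide (z ≤ (x : EReal))) x)
  hGm_eq : ∀ x z, Gm x z =
    c x (decide (z ≤ (x : EReal))) +
      β * ∫ y, Gm y z ∂(κ (decide (z ≤ (x : EReal))) x)
  hV_eq : ∀ lam x, V lam x =
    max (r x false - lam * c x false + β * ∫ y, V lam y ∂(κ false x))
        (r x true - lam * c x true + β * ∫ y, V lam y ∂(κ true x))

/-- `ν` is the Lebesgue–Stieltjes measure of the (bounded nonincreasing
right-continuous) function `h`: `ν(z₁,z₂] = h z₁ - h z₂`. -/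
def IsLSMeasureOfAnti (h : ℝ → ℝ) (ν : Measure ℝ) : Prop :=
  ∀ z₁ z₂ : ℝ, z₁ ≤ z₂ → ν (Set.Ioc z₁ z₂) = ENNReal.ofReal (h z₁ - h z₂)

/-- `ν` is the Lebesgue–Stieltjes measure of the (bounded nondecreasing
right-continuous) function `h`: `ν(z₁,z₂] = h z₂ - h z₁`. -/
def IsLSMeasureOfMono (h : ℝ → ℝ) (ν : Measure ℝ) : Prop :=
  ∀ z₁ z₂ : ℝ, z₁ ≤ z₂ → ν (Set.Ioc z₁ z₂) = ENNReal.ofReal (h z₂ - h z₁)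

/-- The real interval `(z₁, z₂] ⊆ ℝ` with extended-real endpoints. -/
def iocR (z₁ z₂ : EReal) : Set ℝ := {y : ℝ | z₁ < (y : EReal) ∧ (y : EReal) ≤ z₂}

/-- `t`-step distribution of the Markov chain with kernel `κ` and initial law `p`. -/
def kerIter (κ : Kernel ℝ ℝ) : ℕ → Measure ℝ → Measure ℝ
  | 0, p => p
  | (t + 1), p => (kerIter κ t p).bind fun x => κ x

namespace Bandit

variable (P : Bandit)

/-- Marginal reward metric `f(x,z)` of the `z`-policy. -/
def f (x : ℝ) (z : EReal) : ℝ :=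
  (P.r x true - P.r x false) +
    P.β * ((∫ y, P.F y z ∂(P.κ true x)) - ∫ y, P.F y z ∂(P.κ false x))

/-- Marginal resource metric `g(x,z)` of the `z`-policy. -/
def g (x : ℝ) (z : EReal) : ℝ :=
  (P.c x true - P.c x false) +
    P.β * ((∫ y, P.G y z ∂(P.κ true x)) - ∫ y, P.G y z ∂(P.κ false x))

/-- Marginal reward metric `f(x,z⁻)` of the `z⁻`-policy. -/
def fm (x : ℝ) (z : EReal) : ℝ :=
  (P.r x true - P.r x false) +
    P.β * ((∫ y, P.Fm y z ∂(P.κ true x)) - ∫ y, P.Fm y z ∂(P.κ false x))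

/-- Marginal resource metric `g(x,z⁻)` of the `z⁻`-policy. -/
def gm (x : ℝ) (z : EReal) : ℝ :=
  (P.c x true - P.c x false) +
    P.β * ((∫ y, P.Gm y z ∂(P.κ true x)) - ∫ y, P.Gm y z ∂(P.κ false x))

/-- Marginal productivity metric `m(x,z) = f(x,z)/g(x,z)`. -/
def m (x : ℝ) (z : EReal) : ℝ := P.f x z / P.g x z

/-- Marginal productivity metric `m(x,z⁻) = f(x,z⁻)/g(x,z⁻)`. -/
def mm (x : ℝ) (z : EReal) : ℝ := P.fm x z / P.gm x z

/-- The marginal productivity (MP) index `m*(x) = m(x,x)`. -/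
def mStar (x : ℝ) : ℝ := P.m x (x : EReal)

/-- The active action is `P_lam`-optimal at `x`. -/
def ActOpt (lam x : ℝ) : Prop :=
  P.r x false - lam * P.c x false + P.β * ∫ y, P.V lam y ∂(P.κ false x) ≤
    P.r x true - lam * P.c x true + P.β * ∫ y, P.V lam y ∂(P.κ true x)

/-- The passive action is `P_lam`-optimal at `x`. -/
def PassOpt (lam x : ℝ) : Prop :=
  P.r x true - lam * P.c x true + P.β * ∫ y, P.V lam y ∂(P.κ true x) ≤
    P.r x false - lam * P.c x false + P.β * ∫ y, P.V lam y ∂(P.κ false x)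

/-- The project is indexable with index `ν`. -/
def Indexable (ν : ℝ → ℝ) : Prop :=
  ∀ lam x, (P.ActOpt lam x ↔ lam ≤ ν x) ∧ (P.PassOpt lam x ↔ ν x ≤ lam)

/-- The `z`-policy is `P_lam`-optimal. -/
def ZPolicyOpt (z : EReal) (lam : ℝ) : Prop :=
  ∀ x, P.F x z - lam * P.G x z = P.V lam x

/-- The `z⁻`-policy is `P_lam`-optimal. -/
def ZmPolicyOpt (z : EReal) (lam : ℝ) : Prop :=
  ∀ x, P.Fm x z - lam * P.Gm x z = P.V lam x

/-- The project is strongly threshold-indexable with index `ν`. -/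
def StronglyThresholdIndexable (ν : ℝ → ℝ) : Prop :=
  P.Indexable ν ∧
    ∀ lam : ℝ, ∃ z : EReal, P.ZPolicyOpt z lam ∧ P.ZmPolicyOpt z lam

/-- PCL-indexability condition (PCLI1). -/
def PCLI1 : Prop := ∀ (x : ℝ) (z : EReal), 0 < P.g x z

/-- PCL-indexability condition (PCLI2). -/
def PCLI2 : Prop :=
  Monotone P.mStar ∧ Continuous P.mStar ∧ BddBelow (Set.range P.mStar)

/-- PCL-indexability condition (PCLI3). -/
def PCLI3 : Prop :=
  ∀ x : ℝ, ∀ ν : Measure ℝ, IsLSMeasureOfAnti (fun z : ℝ => P.G x z) ν →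
    ∀ z₁ z₂ : ℝ, z₁ < z₂ →
      P.F x z₂ - P.F x z₁ = -∫ z in Set.Ioc z₁ z₂, P.mStar z ∂ν

/-- The project is PCL-indexable. -/
def PCLIndexable : Prop := P.PCLI1 ∧ P.PCLI2 ∧ P.PCLI3

/-- Reward metric with initial distribution `p`. -/
def Fp (p : Measure ℝ) (z : EReal) : ℝ := ∫ x, P.F x z ∂p

/-- Resource metric with initial distribution `p`. -/
def Gp (p : Measure ℝ) (z : EReal) : ℝ := ∫ x, P.G x z ∂p

/-- `z⁻`-policy reward metric with initial distribution `p`. -/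
def Fmp (p : Measure ℝ) (z : EReal) : ℝ := ∫ x, P.Fm x z ∂p

/-- `z⁻`-policy resource metric with initial distribution `p`. -/
def Gmp (p : Measure ℝ) (z : EReal) : ℝ := ∫ x, P.Gm x z ∂p

/-- An admissible initial distribution: a probability measure with `∫ w dp < ∞`. -/
def IsInitDist (p : Measure ℝ) : Prop :=
  IsProbabilityMeasure p ∧ Integrable P.w p

/-- The transition kernel of the `z`-policy (active iff `x > z`). -/
def thrKer (z : EReal) : Kernel ℝ ℝ :=
  haveI : DecidablePred (· ∈ {x : ℝ | z < (x : EReal)}) := Classical.decPred _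
  Kernel.piecewise
    (show MeasurableSet {x : ℝ | z < (x : EReal)} from
      measurable_coe_real_ereal measurableSet_Ioi)
    (P.κ true) (P.κ false)

/-- The transition kernel of the `z⁻`-policy (active iff `x ≥ z`). -/
def thrKerM (z : EReal) : Kernel ℝ ℝ :=
  haveI : DecidablePred (· ∈ {x : ℝ | z ≤ (x : EReal)}) := Classical.decPred _
  Kernel.piecewise
    (show MeasurableSet {x : ℝ | z ≤ (x : EReal)} from
      measurable_coe_real_ereal measurableSet_Ici)
    (P.κ true) (P.κ false)

/-- The (discounted) state occupation measure `μ_p^z` of the `z`-policy. -/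
def occ (z : EReal) (p : Measure ℝ) : Measure ℝ :=
  Measure.sum fun t : ℕ => ENNReal.ofReal (P.β ^ t) • kerIter (P.thrKer z) t p

/-- The (discounted) state occupation measure `μ_p^{z⁻}` of the `z⁻`-policy. -/
def occM (z : EReal) (p : Measure ℝ) : Measure ℝ :=
  Measure.sum fun t : ℕ => ENNReal.ofReal (P.β ^ t) • kerIter (P.thrKerM z) t p

end Bandit

/-- Finite-horizon reward metric `F_k(x,z)` (value iteration). -/
def Bandit.Fk (P : Bandit) : ℕ → ℝ → EReal → ℝ
  | 0, x, z => P.r x (decide (z < (x : EReal)))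
  | (k + 1), x, z =>
      P.r x (decide (z < (x : EReal))) +
        P.β * ∫ y, Bandit.Fk P k y z ∂(P.κ (decide (z < (x : EReal))) x)

/-- Finite-horizon resource metric `G_k(x,z)` (value iteration). -/
def Bandit.Gk (P : Bandit) : ℕ → ℝ → EReal → ℝ
  | 0, x, z => P.c x (decide (z < (x : EReal)))
  | (k + 1), x, z =>
      P.c x (decide (z < (x : EReal))) +
        P.β * ∫ y, Bandit.Gk P k y z ∂(P.κ (decide (z < (x : EReal))) x)

/-- Finite-horizon marginal reward metric `f_k(x,z)`. -/
def Bandit.fk (P : Bandit) : ℕ → ℝ → EReal → ℝ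
  | 0, x, _ => P.r x true - P.r x false
  | (k + 1), x, z =>
      (P.r x true - P.r x false) +
        P.β * ((∫ y, P.Fk k y z ∂(P.κ true x)) - ∫ y, P.Fk k y z ∂(P.κ false x))

/-- Finite-horizon marginal resource metric `g_k(x,z)`. -/
def Bandit.gk (P : Bandit) : ℕ → ℝ → EReal → ℝ
  | 0, x, _ => P.c x true - P.c x false
  | (k + 1), x, z =>
      (P.c x true - P.c x false) +
        P.β * ((∫ y, P.Gk k y z ∂(P.κ true x)) - ∫ y, P.Gk k y z ∂(P.κ false x))

namespace Bandit

variable (P : Bandit)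

/-- Finite-horizon MP metric `m_k(x,z)`. -/
def mk' (k : ℕ) (x : ℝ) (z : EReal) : ℝ := P.fk k x z / P.gk k x z

/-- Finite-horizon MP index `m*_k(x)`. -/
def mkStar (k : ℕ) (x : ℝ) : ℝ := P.mk' k x (x : EReal)

/-- `g̲(x,z) = inf_k g_k(x,z)`. -/
def gbar (x : ℝ) (z : EReal) : ℝ := ⨅ k : ℕ, P.gk k x z

end Bandit

namespace BanditAux

/-- Abstract threshold metric data: covers `F`, `G`, `Fm`, `Gm` uniformly. -/
structure Aux (P : Bandit) where
  ρ : ℝ → Bool → ℝ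
  α : ℝ → EReal → Bool
  H : ℝ → EReal → ℝ
  hρ_bd : ∀ x a, |ρ x a| ≤ P.M * P.w x
  hρ_meas : ∀ a, Measurable fun x => ρ x a
  hα_meas : ∀ z, MeasurableSet {x : ℝ | α x z = true}
  hH_meas : ∀ z, Measurable fun x => H x z
  hH_bdd : ∀ z, ∃ C, ∀ x, |H x z| ≤ C * P.w x
  hH_eq : ∀ x z, H x z = ρ x (α x z) + P.β * ∫ y, H y z ∂(P.κ (α x z) x)

/-- The uniform `w`-norm bound `M / (1 - γ)`. -/
def D (P : Bandit) : ℝ := P.M / (1 - P.γ)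

variable {P : Bandit}

lemma hγ0 : (0:ℝ) ≤ P.γ := le_trans P.hβ0 P.hβγ

lemma h1γ : (0:ℝ) < 1 - P.γ := by linarith [P.hγ1]

lemma hD0 : 0 < D P := div_pos P.hM h1γ

lemma hMD : P.M ≤ D P := by
  rw [D, le_div_iff₀ h1γ]
  have := hγ0 (P := P)
  nlinarith [P.hM.le]

lemma key : P.M + P.γ * D P = D P := by
  have h : (1 - P.γ) ≠ 0 := ne_of_gt h1γ
  rw [D, eq_div_iff h, add_mul, mul_assoc, div_mul_cancel₀ _ h]
  ring

lemma hw0 (x : ℝ) : 0 ≤ P.w x := le_trans zero_le_one (P.hw_one x)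

/-- integrability from a `w`-bound. -/
lemma integrable_wbd {μ : Measure ℝ} (hw : Integrable P.w μ) {φ : ℝ → ℝ}
    (hm : Measurable φ) {c : ℝ} (hb : ∀ y, |φ y| ≤ c * P.w y) : Integrable φ μ :=
  (hw.const_mul c).mono' hm.aestronglyMeasurable
    (ae_of_all _ (by simpa [Real.norm_eq_abs] using hb))

/-- `β |∫ φ dκᵃ(x)| ≤ c γ w x` from `|φ| ≤ c w`. -/
lemma beta_int_le (a : Bool) (x : ℝ) {φ : ℝ → ℝ} {c : ℝ} (hc : 0 ≤ c)
    (hb : ∀ y, |φ y| ≤ c * P.w y) :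
    P.β * |∫ y, φ y ∂(P.κ a x)| ≤ c * (P.γ * P.w x) := by
  have h1 : |∫ y, φ y ∂(P.κ a x)| ≤ ∫ y, c * P.w y ∂(P.κ a x) := by
    simpa [Real.norm_eq_abs] using
      norm_integral_le_of_norm_le (f := φ) (μ := (P.κ a x)) ((P.hw_int a x).const_mul c)
        (ae_of_all _ (fun y => by simpa [Real.norm_eq_abs] using hb y))
  rw [integral_const_mul] at h1
  have h2 : P.β * |∫ y, φ y ∂(P.κ a x)| ≤ P.β * (c * ∫ y, P.w y ∂(P.κ a x)) :=
    mul_le_mul_of_nonneg_left h1 P.hβ0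
  have h3 : P.β * (c * ∫ y, P.w y ∂(P.κ a x)) = c * (P.β * ∫ y, P.w y ∂(P.κ a x)) := by
    ring
  have h4 := P.hw_drift a x
  nlinarith [h2, h3, h4]

/-- Value iteration for an abstract metric. -/
def Aux.iter (A : Aux P) : ℕ → ℝ → EReal → ℝ
  | 0, x, z => A.ρ x (A.α x z)
  | (k+1), x, z => A.ρ x (A.α x z) + P.β * ∫ y, A.iter k y z ∂(P.κ (A.α x z) x)

lemma Aux.iter_bd (A : Aux P) : ∀ k x z, |A.iter k x z| ≤ D P * P.w x := by
  intro k
  induction k with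
  | zero =>
    intro x z
    calc |A.iter 0 x z| ≤ P.M * P.w x := A.hρ_bd x _
    _ ≤ D P * P.w x := mul_le_mul_of_nonneg_right hMD (hw0 x)
  | succ k ih =>
    intro x z
    have h1 : |A.iter (k+1) x z| ≤ |A.ρ x (A.α x z)| +
        P.β * |∫ y, A.iter k y z ∂(P.κ (A.α x z) x)| := by
      rw [Aux.iter]
      calc |A.ρ x (A.α x z) + P.β * ∫ y, A.iter k y z ∂(P.κ (A.α x z) x)|
          ≤ |A.ρ x (A.α x z)| + |P.β * ∫ y, A.iter k y z ∂(P.κ (A.α x z) x)| := abs_add_le _ _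
        _ = |A.ρ x (A.α x z)| + P.β * |∫ y, A.iter k y z ∂(P.κ (A.α x z) x)| := by
            rw [abs_mul, abs_of_nonneg P.hβ0]
    have h2 := beta_int_le (A.α x z) x (hD0 (P := P)).le (fun y => ih y z)
    have h3 := A.hρ_bd x (A.α x z)
    have hk := key (P := P)
    nlinarith [hw0 (P := P) x]

lemma Aux.iter_meas (A : Aux P) : ∀ k z, Measurable fun x => A.iter k x z := by
  intro k
  induction k with
  | zero =>
    intro z
    have he : (fun x => A.iter 0 x z) =
        fun x => if A.α x z = true then A.ρ x true else A.ρ x false := by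
      funext x; cases h : A.α x z <;> simp [Aux.iter, h]
    rw [he]
    exact Measurable.ite (A.hα_meas z) (A.hρ_meas true) (A.hρ_meas false)
  | succ k ih =>
    intro z
    have hm : ∀ a : Bool, Measurable fun x => ∫ y, A.iter k y z ∂(P.κ a x) := by
      intro a
      haveI := P.hκ a
      have : StronglyMeasurable (fun q : ℝ × ℝ => A.iter k q.2 z) :=
        ((ih z).comp measurable_snd).stronglyMeasurable
      exact (this.integral_kernel_prod_right' (κ := P.κ a)).measurable
    have he : (fun x => A.iter (k+1) x z) =
        fun x => if A.α x z = true then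
          A.ρ x true + P.β * ∫ y, A.iter k y z ∂(P.κ true x)
        else A.ρ x false + P.β * ∫ y, A.iter k y z ∂(P.κ false x) := by
      funext x; cases h : A.α x z <;> simp [Aux.iter, h]
    rw [he]
    exact Measurable.ite (A.hα_meas z)
      ((A.hρ_meas true).add ((hm true).const_mul P.β))
      ((A.hρ_meas false).add ((hm false).const_mul P.β))

lemma Aux.H_bd (A : Aux P) : ∀ x z, |A.H x z| ≤ D P * P.w x := by
  intro x z
  obtain ⟨C, hC⟩ := A.hH_bdd z
  set C' : ℝ := max C 0 with hC'
  have hC'0 : 0 ≤ C' := le_max_right _ _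
  have claim : ∀ n : ℕ, ∀ x, |A.H x z| ≤ (D P + P.γ ^ n * C') * P.w x := by
    intro n
    induction n with
    | zero =>
      intro x
      have : |A.H x z| ≤ C' * P.w x :=
        le_trans (hC x) (mul_le_mul_of_nonneg_right (le_max_left _ _) (hw0 x))
      nlinarith [hw0 (P := P) x, hD0 (P := P), this]
    | succ n ih =>
      intro x
      have hc : 0 ≤ D P + P.γ ^ n * C' := add_nonneg (hD0 (P := P)).le (mul_nonneg (pow_nonneg hγ0 n) hC'0)
      have h2 := beta_int_le (A.α x z) x hc (fun y => ih y)
      have h3 := A.hρ_bd x (A.α x z)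
      have h1 : |A.H x z| ≤ |A.ρ x (A.α x z)| +
          P.β * |∫ y, A.H y z ∂(P.κ (A.α x z) x)| := by
        rw [A.hH_eq x z]
        refine le_trans (abs_add_le _ _) ?_
        rw [abs_mul, abs_of_nonneg P.hβ0]
      have hk := key (P := P)
      have : |A.H x z| ≤ (P.M + P.γ * (D P + P.γ ^ n * C')) * P.w x := by nlinarith
      calc |A.H x z| ≤ (P.M + P.γ * (D P + P.γ ^ n * C')) * P.w x := this
        _ = (D P + P.γ ^ (n+1) * C') * P.w x := by linear_combination P.w x * hk
  have hlim : Filter.Tendsto (fun n : ℕ => (D P + P.γ ^ n * C') * P.w x)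
      Filter.atTop (nhds (D P * P.w x)) := by
    have h0 : Filter.Tendsto (fun n : ℕ => P.γ ^ n) Filter.atTop (nhds 0) :=
      tendsto_pow_atTop_nhds_zero_of_lt_one hγ0 P.hγ1
    have := (((h0.mul_const C').const_add (D P)).mul_const (P.w x))
    simpa using this
  exact ge_of_tendsto hlim (Filter.Eventually.of_forall fun n => claim n x)

lemma Aux.H_int (A : Aux P) {μ : Measure ℝ} (hw : Integrable P.w μ) (z : EReal) :
    Integrable (fun y => A.H y z) μ :=
  integrable_wbd hw (A.hH_meas z) (fun y => A.H_bd y z)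

lemma Aux.iter_int (A : Aux P) {μ : Measure ℝ} (hw : Integrable P.w μ) (k : ℕ) (z : EReal) :
    Integrable (fun y => A.iter k y z) μ :=
  integrable_wbd hw (A.iter_meas k z) (fun y => A.iter_bd k y z)

lemma Aux.err (A : Aux P) : ∀ k x z, |A.H x z - A.iter k x z| ≤ P.γ ^ (k+1) * (D P * P.w x) := by
  intro k
  induction k with
  | zero =>
    intro x z
    have h1 : A.H x z - A.iter 0 x z = P.β * ∫ y, A.H y z ∂(P.κ (A.α x z) x) := by
      rw [A.hH_eq x z, Aux.iter]; ring
    have h2 := beta_int_le (P := P) (A.α x z) x (hD0 (P := P)).le (fun y => A.H_bd y z)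
    rw [h1, abs_mul, abs_of_nonneg P.hβ0]
    calc P.β * |∫ y, A.H y z ∂(P.κ (A.α x z) x)| ≤ D P * (P.γ * P.w x) := h2
      _ = P.γ ^ (0+1) * (D P * P.w x) := by ring
  | succ k ih =>
    intro x z
    have hint1 := A.H_int (P.hw_int (A.α x z) x) z
    have hint2 := A.iter_int (P.hw_int (A.α x z) x) k z
    have h1 : A.H x z - A.iter (k+1) x z =
        P.β * ∫ y, (A.H y z - A.iter k y z) ∂(P.κ (A.α x z) x) := by
      rw [A.hH_eq x z, Aux.iter, integral_sub hint1 hint2]; ring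
    have hb : ∀ y, |A.H y z - A.iter k y z| ≤ (P.γ ^ (k+1) * D P) * P.w y := by
      intro y
      calc |A.H y z - A.iter k y z| ≤ P.γ ^ (k+1) * (D P * P.w y) := ih y z
        _ = (P.γ ^ (k+1) * D P) * P.w y := by ring
    have hc : 0 ≤ P.γ ^ (k+1) * D P := mul_nonneg (pow_nonneg hγ0 _) (hD0 (P := P)).le
    have h2 := beta_int_le (P := P) (A.α x z) x hc hb
    rw [h1, abs_mul, abs_of_nonneg P.hβ0]
    calc P.β * |∫ y, (A.H y z - A.iter k y z) ∂(P.κ (A.α x z) x)|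
        ≤ (P.γ ^ (k+1) * D P) * (P.γ * P.w x) := h2
      _ = P.γ ^ (k+1+1) * (D P * P.w x) := by ring

lemma Aux.iter_tendsto {A A' : Aux P} (hρ : A.ρ = A'.ρ) {l : Filter ℝ}
    [l.IsCountablyGenerated] {zs : EReal}
    (hag : ∀ x : ℝ, ∀ᶠ z : ℝ in l, A.α x (z : EReal) = A'.α x zs) :
    ∀ k x, Filter.Tendsto (fun z : ℝ => A.iter k x (z : EReal)) l
      (nhds (A'.iter k x zs)) := by
  intro k
  induction k with
  | zero =>
    intro x
    refine Filter.Tendsto.congr' ?_ (tendsto_const_nhds (x := A'.iter 0 x zs))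
    filter_upwards [hag x] with z hz
    simp [Aux.iter, hz, hρ]
  | succ k ih =>
    intro x
    set a := A'.α x zs with ha
    have hint : Filter.Tendsto (fun z : ℝ => ∫ y, A.iter k y (z : EReal) ∂(P.κ a x)) l
        (nhds (∫ y, A'.iter k y zs ∂(P.κ a x))) := by
      refine tendsto_integral_filter_of_dominated_convergence (fun y => D P * P.w y)
        (Filter.Eventually.of_forall fun z => (A.iter_meas k z).aestronglyMeasurable)
        (Filter.Eventually.of_forall fun z => ae_of_all _ fun y => by
          simpa [Real.norm_eq_abs] using A.iter_bd k y (z : EReal))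
        ((P.hw_int a x).const_mul _)
        (ae_of_all _ fun y => ih y)
    have h2 : Filter.Tendsto
        (fun z : ℝ => A'.ρ x a + P.β * ∫ y, A.iter k y (z : EReal) ∂(P.κ a x)) l
        (nhds (A'.iter (k+1) x zs)) := by
      have := (hint.const_mul P.β).const_add (A'.ρ x a)
      simpa [Aux.iter] using this
    refine Filter.Tendsto.congr' ?_ h2
    filter_upwards [hag x] with z hz
    simp [Aux.iter, hz, hρ, ha]

lemma Aux.H_tendsto {A A' : Aux P} (hρ : A.ρ = A'.ρ) {l : Filter ℝ}
    [l.IsCountablyGenerated] {zs : EReal}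
    (hag : ∀ x : ℝ, ∀ᶠ z : ℝ in l, A.α x (z : EReal) = A'.α x zs) (x : ℝ) :
    Filter.Tendsto (fun z : ℝ => A.H x (z : EReal)) l (nhds (A'.H x zs)) := by
  rw [Metric.tendsto_nhds]
  intro ε hε
  have h0 : Filter.Tendsto (fun k : ℕ => P.γ ^ (k+1) * (D P * P.w x))
      Filter.atTop (nhds 0) := by
    have h1 : Filter.Tendsto (fun k : ℕ => P.γ ^ (k+1)) Filter.atTop (nhds 0) :=
      (tendsto_pow_atTop_nhds_zero_of_lt_one hγ0 P.hγ1).comp (tendsto_add_atTop_nat 1)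
    simpa using h1.mul_const (D P * P.w x)
  obtain ⟨k, hk⟩ := (h0.eventually (eventually_lt_nhds (show (0:ℝ) < ε/3 by linarith))).exists
  have hiter := Aux.iter_tendsto hρ hag k x
  have hiter' : ∀ᶠ z : ℝ in l, dist (A.iter k x (z : EReal)) (A'.iter k x zs) < ε/3 :=
    hiter (Metric.ball_mem_nhds _ (by linarith))
  filter_upwards [hiter'] with z hz
  have e1 := A.err k x (z : EReal)
  have e2 := A'.err k x zs
  rw [Real.dist_eq] at hz ⊢
  have : |A.H x (z:EReal) - A'.H x zs| ≤
      |A.H x (z:EReal) - A.iter k x (z:EReal)| + |A.iter k x (z:EReal) - A'.iter k x zs|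
        + |A'.iter k x zs - A'.H x zs| := by
    have := abs_sub_le (A.H x (z:EReal)) (A.iter k x (z:EReal)) (A'.H x zs)
    have := abs_sub_le (A.iter k x (z:EReal)) (A'.iter k x zs) (A'.H x zs)
    nlinarith [abs_sub_le (A.H x (z:EReal)) (A.iter k x (z:EReal)) (A'.H x zs),
      abs_sub_le (A.iter k x (z:EReal)) (A'.iter k x zs) (A'.H x zs)]
  have e2' : |A'.iter k x zs - A'.H x zs| ≤ P.γ ^ (k+1) * (D P * P.w x) := by
    rw [abs_sub_comm]; exact e2
  linarith

/-- Convergence of integrated metrics along a filter. -/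
lemma Aux.int_tendsto {A A' : Aux P} (hρ : A.ρ = A'.ρ) {l : Filter ℝ}
    [l.IsCountablyGenerated] {zs : EReal}
    (hag : ∀ x : ℝ, ∀ᶠ z : ℝ in l, A.α x (z : EReal) = A'.α x zs)
    {μ : Measure ℝ} (hw : Integrable P.w μ) :
    Filter.Tendsto (fun z : ℝ => ∫ x, A.H x (z : EReal) ∂μ) l
      (nhds (∫ x, A'.H x zs ∂μ)) := by
  refine tendsto_integral_filter_of_dominated_convergence (fun y => D P * P.w y)
    (Filter.Eventually.of_forall fun z => (A.hH_meas _).aestronglyMeasurable)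
    (Filter.Eventually.of_forall fun z => ae_of_all _ fun y => by
      simpa [Real.norm_eq_abs] using A.H_bd y (z : EReal))
    (hw.const_mul _)
    (ae_of_all _ fun y => Aux.H_tendsto hρ hag y)

/-- The marginal metric is bounded uniformly in `z`. -/
lemma Aux.marg_bd (A : Aux P) (x : ℝ) (z : EReal) :
    |(A.ρ x true - A.ρ x false) +
      P.β * ((∫ y, A.H y z ∂(P.κ true x)) - ∫ y, A.H y z ∂(P.κ false x))| ≤
      2 * P.M * P.w x + 2 * (D P * (P.γ * P.w x)) := by
  have h1 := beta_int_le (P := P) true x (hD0 (P := P)).le (fun y => A.H_bd y z)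
  have h2 := beta_int_le (P := P) false x (hD0 (P := P)).le (fun y => A.H_bd y z)
  have h3 := A.hρ_bd x true
  have h4 := A.hρ_bd x false
  have e1 : |A.ρ x true - A.ρ x false| ≤ 2 * P.M * P.w x := by
    have := abs_sub (A.ρ x true) (A.ρ x false); linarith
  have e2 : |P.β * ((∫ y, A.H y z ∂(P.κ true x)) - ∫ y, A.H y z ∂(P.κ false x))| ≤
      2 * (D P * (P.γ * P.w x)) := by
    rw [abs_mul, abs_of_nonneg P.hβ0]
    have := abs_sub (∫ y, A.H y z ∂(P.κ true x)) (∫ y, A.H y z ∂(P.κ false x))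
    nlinarith [P.hβ0]
  calc |(A.ρ x true - A.ρ x false) + P.β * ((∫ y, A.H y z ∂(P.κ true x)) -
        ∫ y, A.H y z ∂(P.κ false x))|
      ≤ |A.ρ x true - A.ρ x false| +
        |P.β * ((∫ y, A.H y z ∂(P.κ true x)) - ∫ y, A.H y z ∂(P.κ false x))| := abs_add_le _ _
    _ ≤ 2 * P.M * P.w x + 2 * (D P * (P.γ * P.w x)) := add_le_add e1 e2

/-- Convergence of the marginal metrics along a filter. -/
lemma Aux.marg_tendsto {A A' : Aux P} (hρ : A.ρ = A'.ρ) {l : Filter ℝ}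
    [l.IsCountablyGenerated] {zs : EReal}
    (hag : ∀ x : ℝ, ∀ᶠ z : ℝ in l, A.α x (z : EReal) = A'.α x zs) (x : ℝ) :
    Filter.Tendsto (fun z : ℝ => (A.ρ x true - A.ρ x false) +
      P.β * ((∫ y, A.H y (z : EReal) ∂(P.κ true x)) - ∫ y, A.H y (z : EReal) ∂(P.κ false x))) l
      (nhds ((A'.ρ x true - A'.ρ x false) +
        P.β * ((∫ y, A'.H y zs ∂(P.κ true x)) - ∫ y, A'.H y zs ∂(P.κ false x)))) := by
  have hT := Aux.int_tendsto hρ hag (P.hw_int true x)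
  have hF := Aux.int_tendsto hρ hag (P.hw_int false x)
  rw [hρ]
  exact ((hT.sub hF).const_mul P.β).const_add _

/-- The abstract metric realizing `F`. -/
def auxF (P : Bandit) : Aux P where
  ρ := P.r
  α := fun x z => decide (z < (x : EReal))
  H := P.F
  hρ_bd := P.hr_bd
  hρ_meas := fun a => (P.hr_cont a).measurable
  hα_meas := fun z => by
    have h : {x : ℝ | decide (z < (x : EReal)) = true} = {x : ℝ | z < (x : EReal)} := by
      ext x; simp
    rw [h]
    exact measurable_coe_real_ereal measurableSet_Ioi
  hH_meas := P.hF_meas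
  hH_bdd := P.hF_bdd
  hH_eq := P.hF_eq

lemma c_abs_bd (P : Bandit) (x : ℝ) (a : Bool) : |P.c x a| ≤ P.M * P.w x := by
  have h0 : 0 ≤ P.c x a := by
    cases a
    · exact P.hc0 x
    · exact (P.hc0 x).trans (P.hc01 x).le
  rw [abs_of_nonneg h0]
  exact P.hc_bd x a

/-- The abstract metric realizing `G`. -/
def auxG (P : Bandit) : Aux P where
  ρ := P.c
  α := fun x z => decide (z < (x : EReal))
  H := P.G
  hρ_bd := c_abs_bd P
  hρ_meas := fun a => (P.hc_cont a).measurable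
  hα_meas := fun z => by
    have h : {x : ℝ | decide (z < (x : EReal)) = true} = {x : ℝ | z < (x : EReal)} := by
      ext x; simp
    rw [h]
    exact measurable_coe_real_ereal measurableSet_Ioi
  hH_meas := P.hG_meas
  hH_bdd := P.hG_bdd
  hH_eq := P.hG_eq

/-- The abstract metric realizing `Fm`. -/
def auxFm (P : Bandit) : Aux P where
  ρ := P.r
  α := fun x z => decide (z ≤ (x : EReal))
  H := P.Fm
  hρ_bd := P.hr_bd
  hρ_meas := fun a => (P.hr_cont a).measurable
  hα_meas := fun z => by
    have h : {x : ℝ | decide (z ≤ (x : EReal)) = true} = {x : ℝ | z ≤ (x : EReal)} := by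
      ext x; simp
    rw [h]
    exact measurable_coe_real_ereal measurableSet_Ici
  hH_meas := P.hFm_meas
  hH_bdd := P.hFm_bdd
  hH_eq := P.hFm_eq

/-- The abstract metric realizing `Gm`. -/
def auxGm (P : Bandit) : Aux P where
  ρ := P.c
  α := fun x z => decide (z ≤ (x : EReal))
  H := P.Gm
  hρ_bd := c_abs_bd P
  hρ_meas := fun a => (P.hc_cont a).measurable
  hα_meas := fun z => by
    have h : {x : ℝ | decide (z ≤ (x : EReal)) = true} = {x : ℝ | z ≤ (x : EReal)} := by
      ext x; simp
    rw [h]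
    exact measurable_coe_real_ereal measurableSet_Ici
  hH_meas := P.hGm_meas
  hH_bdd := P.hGm_bdd
  hH_eq := P.hGm_eq

/-- Agreement on a right neighborhood. -/
lemma hag_right (P : Bandit) (z₀ : ℝ) (x : ℝ) :
    ∀ᶠ z : ℝ in nhdsWithin z₀ (Set.Ici z₀),
      (auxF P).α x ((z : ℝ) : EReal) = (auxF P).α x ((z₀ : ℝ) : EReal) := by
  simp only [auxF, decide_eq_decide, EReal.coe_lt_coe_iff]
  rcases lt_or_ge z₀ x with h | h
  · filter_upwards [Ico_mem_nhdsGE h] with z hz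
    constructor <;> intro <;> [exact h; exact hz.2]
  · filter_upwards [self_mem_nhdsWithin] with z (hz : z₀ ≤ z)
    constructor <;> intro h1 <;> [linarith; linarith]

/-- Agreement on a left neighborhood. -/
lemma hag_left (P : Bandit) (z₀ : ℝ) (x : ℝ) :
    ∀ᶠ z : ℝ in nhdsWithin z₀ (Set.Iio z₀),
      (auxF P).α x ((z : ℝ) : EReal) = (auxFm P).α x ((z₀ : ℝ) : EReal) := by
  simp only [auxF, auxFm, decide_eq_decide, EReal.coe_lt_coe_iff, EReal.coe_le_coe_iff]
  rcases le_or_gt z₀ x with h | h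
  · filter_upwards [self_mem_nhdsWithin] with z (hz : z < z₀)
    constructor <;> intro h1 <;> [exact h; linarith]
  · filter_upwards [Ico_mem_nhdsLT h] with z hz
    constructor <;> intro h1 <;> [linarith [hz.1]; linarith]

/-- Agreement at `-∞`. -/
lemma hag_bot (P : Bandit) (x : ℝ) :
    ∀ᶠ z : ℝ in Filter.atBot, (auxF P).α x ((z : ℝ) : EReal) = (auxF P).α x ⊥ := by
  have hbot : (auxF P).α x ⊥ = true := by simp [auxF]
  rw [hbot]
  filter_upwards [eventually_lt_atBot x] with z hz
  simp [auxF, EReal.coe_lt_coe_iff, hz]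

/-- Agreement at `+∞`. -/
lemma hag_top (P : Bandit) (x : ℝ) :
    ∀ᶠ z : ℝ in Filter.atTop, (auxF P).α x ((z : ℝ) : EReal) = (auxF P).α x ⊤ := by
  have htop : (auxF P).α x ⊤ = false := by simp [auxF]
  rw [htop]
  filter_upwards [eventually_ge_atTop x] with z hz
  simp [auxF, EReal.coe_lt_coe_iff, not_lt.mpr hz]

end BanditAux
/-- Càdlàg properties of the performance metrics as functions of the threshold:
they are bounded, right-continuous, their left limits at `z` are the
`z⁻`-policy metrics, and they converge at `∓∞` to the always-active /
always-passive metrics. -/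
theorem metrics_cadlag (P : Bandit) (p : Measure ℝ) (hp : P.IsInitDist p)
    (x : ℝ) :
    ((∃ C, ∀ z : ℝ, |P.Fp p z| ≤ C) ∧ (∃ C, ∀ z : ℝ, |P.Gp p z| ≤ C) ∧
      (∃ C, ∀ z : ℝ, |P.f x z| ≤ C) ∧ (∃ C, ∀ z : ℝ, |P.g x z| ≤ C)) ∧
    (∀ z₀ : ℝ,
      Filter.Tendsto (fun z : ℝ => P.Fp p z) (nhdsWithin z₀ (Set.Ici z₀)) (nhds (P.Fp p z₀)) ∧
      Filter.Tendsto (fun z : ℝ => P.Gp p z) (nhdsWithin z₀ (Set.Ici z₀)) (nhds (P.Gp p z₀)) ∧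
      Filter.Tendsto (fun z : ℝ => P.f x z) (nhdsWithin z₀ (Set.Ici z₀)) (nhds (P.f x z₀)) ∧
      Filter.Tendsto (fun z : ℝ => P.g x z) (nhdsWithin z₀ (Set.Ici z₀)) (nhds (P.g x z₀))) ∧
    (∀ z₀ : ℝ,
      Filter.Tendsto (fun z : ℝ => P.Fp p z) (nhdsWithin z₀ (Set.Iio z₀)) (nhds (P.Fmp p z₀)) ∧
      Filter.Tendsto (fun z : ℝ => P.Gp p z) (nhdsWithin z₀ (Set.Iio z₀)) (nhds (P.Gmp p z₀)) ∧
      Filter.Tendsto (fun z : ℝ => P.f x z) (nhdsWithin z₀ (Set.Iio z₀)) (nhds (P.fm x z₀)) ∧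
      Filter.Tendsto (fun z : ℝ => P.g x z) (nhdsWithin z₀ (Set.Iio z₀)) (nhds (P.gm x z₀))) ∧
    (Filter.Tendsto (fun z : ℝ => P.Fp p z) Filter.atBot (nhds (P.Fp p ⊥)) ∧
      Filter.Tendsto (fun z : ℝ => P.Gp p z) Filter.atBot (nhds (P.Gp p ⊥)) ∧
      Filter.Tendsto (fun z : ℝ => P.f x z) Filter.atBot (nhds (P.f x ⊥)) ∧
      Filter.Tendsto (fun z : ℝ => P.g x z) Filter.atBot (nhds (P.g x ⊥))) ∧
    (Filter.Tendsto (fun z : ℝ => P.Fp p z) Filter.atTop (nhds (P.Fp p ⊤)) ∧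
      Filter.Tendsto (fun z : ℝ => P.Gp p z) Filter.atTop (nhds (P.Gp p ⊤)) ∧
      Filter.Tendsto (fun z : ℝ => P.f x z) Filter.atTop (nhds (P.f x ⊤)) ∧
      Filter.Tendsto (fun z : ℝ => P.g x z) Filter.atTop (nhds (P.g x ⊤))) := by
  obtain ⟨hprob, hwp⟩ := hp
  have hbFp : ∀ (A : BanditAux.Aux P) (z : EReal),
      |∫ x, A.H x z ∂p| ≤ BanditAux.D P * ∫ x, P.w x ∂p := by
    intro A z
    have h := norm_integral_le_of_norm_le (f := fun x => A.H x z) (μ := p)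
      (hwp.const_mul (BanditAux.D P))
      (ae_of_all _ fun y => by simpa [Real.norm_eq_abs] using A.H_bd y z)
    simpa [Real.norm_eq_abs, integral_const_mul] using h
  refine ⟨⟨⟨_, fun z => hbFp (BanditAux.auxF P) z⟩,
      ⟨_, fun z => hbFp (BanditAux.auxG P) z⟩,
      ⟨_, fun z => (BanditAux.auxF P).marg_bd x z⟩,
      ⟨_, fun z => (BanditAux.auxG P).marg_bd x z⟩⟩,
    fun z₀ => ⟨
      BanditAux.Aux.int_tendsto (A := BanditAux.auxF P) (A' := BanditAux.auxF P) rfl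
        (BanditAux.hag_right P z₀) hwp,
      BanditAux.Aux.int_tendsto (A := BanditAux.auxG P) (A' := BanditAux.auxG P) rfl
        (BanditAux.hag_right P z₀) hwp,
      BanditAux.Aux.marg_tendsto (A := BanditAux.auxF P) (A' := BanditAux.auxF P) rfl
        (BanditAux.hag_right P z₀) x,
      BanditAux.Aux.marg_tendsto (A := BanditAux.auxG P) (A' := BanditAux.auxG P) rfl
        (BanditAux.hag_right P z₀) x⟩,
    fun z₀ => ⟨
      BanditAux.Aux.int_tendsto (A := BanditAux.auxF P) (A' := BanditAux.auxFm P) rfl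
        (BanditAux.hag_left P z₀) hwp,
      BanditAux.Aux.int_tendsto (A := BanditAux.auxG P) (A' := BanditAux.auxGm P) rfl
        (BanditAux.hag_left P z₀) hwp,
      BanditAux.Aux.marg_tendsto (A := BanditAux.auxF P) (A' := BanditAux.auxFm P) rfl
        (BanditAux.hag_left P z₀) x,
      BanditAux.Aux.marg_tendsto (A := BanditAux.auxG P) (A' := BanditAux.auxGm P) rfl
        (BanditAux.hag_left P z₀) x⟩,
    ⟨BanditAux.Aux.int_tendsto (A := BanditAux.auxF P) (A' := BanditAux.auxF P) rfl
        (BanditAux.hag_bot P) hwp,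
      BanditAux.Aux.int_tendsto (A := BanditAux.auxG P) (A' := BanditAux.auxG P) rfl
        (BanditAux.hag_bot P) hwp,
      BanditAux.Aux.marg_tendsto (A := BanditAux.auxF P) (A' := BanditAux.auxF P) rfl
        (BanditAux.hag_bot P) x,
      BanditAux.Aux.marg_tendsto (A := BanditAux.auxG P) (A' := BanditAux.auxG P) rfl
        (BanditAux.hag_bot P) x⟩,
    ⟨BanditAux.Aux.int_tendsto (A := BanditAux.auxF P) (A' := BanditAux.auxF P) rfl
        (BanditAux.hag_top P) hwp,
      BanditAux.Aux.int_tendsto (A := BanditAux.auxG P) (A' := BanditAux.auxG P) rfl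
        (BanditAux.hag_top P) hwp,
      BanditAux.Aux.marg_tendsto (A := BanditAux.auxF P) (A' := BanditAux.auxF P) rfl
        (BanditAux.hag_top P) x,
      BanditAux.Aux.marg_tendsto (A := BanditAux.auxG P) (A' := BanditAux.auxG P) rfl
        (BanditAux.hag_top P) x⟩⟩
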